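/- Let C = XᵀX/n have unit diagonal and suppose the columns of X are in general position so that V(·; β̌, u) has a unique minimizer for every u. Fix β̌ ∈ R^p with |supp(β̌)| ≤ q and supp(β̌) ⊆ A₀, σ > 0 and σ̂ > 0 with max{|σ̂/σ − 1|, |σ/σ̂ − 1|} ≤ ζ ∈ [0,1), and assume κ(q, 3) > 0. Let u* ∈ R^p satisfy |u*_j| ≤ (1 − ζ) w_j λ/2 for all j, and define δ* = argmin_δ V(δ; β̌, u*) and δ*₀ = argmin_δ V(δ; β̌, (σ/σ̂)u*). Then (1/n)‖X(δ* − δ*₀)‖₂² ≤ 32 w_max r² λ² ζ Σ_{j∈A₀} w_j² / (w_min κ(q,3)²). -/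

import Mathlib

open Matrix

/-- The localized Lasso criterion `V(δ; b, u)`, where `C = XᵀX/n`. -/
noncomputable def Vfun {n p : ℕ} (X : Matrix (Fin n) (Fin p) ℝ) (w : Fin p → ℝ)
    (lam r : ℝ) (b u δ : Fin p → ℝ) : ℝ :=
  (n / (2 * r ^ 2)) * dotProduct δ (((n : ℝ)⁻¹ • (Xᵀ * X)).mulVec δ)
    - (n / r) * dotProduct δ u
    + n * lam * ∑ j, w j * (|b j + δ j / r| - |b j|)

private lemma combine_aux (a c K Q1 Q2 Qd P1 P2 Pm A1 B1 A2 A2' : ℝ) (hK : 0 ≤ K)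
    (h1 : a*Q1 - c*A1 + K*P1 ≤ a*((Q1+Q2-Qd/2)/2) - c*((A1+B1)/2) + K*Pm)
    (h2 : a*Q2 - c*A2 + K*P2 ≤ a*((Q1+Q2-Qd/2)/2) - c*((A2'+A2)/2) + K*Pm)
    (hP : 2*Pm ≤ P1 + P2) :
    a*(Qd/2) ≤ (c/2)*((A1 - B1) - (A2' - A2)) := by
  nlinarith [mul_le_mul_of_nonneg_left hP hK]

private lemma cone_aux (ν r lam Qd L Pd Tin Tout : ℝ) (hν : 0 < ν) (hr : 0 < r)
    (hlam : 0 < lam) (hTout0 : 0 ≤ Tout)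
    (hv : (2*r^2)⁻¹*Qd - ν/r*L + ν*lam*Pd ≤ 0)
    (hQ : 0 ≤ Qd) (hL : L ≤ lam/2*(Tin+Tout)) (hP : (Tout - Tin)/r ≤ Pd) :
    Tout ≤ 3*Tin ∧ Qd ≤ 3*ν*lam*r*Tin := by
  have hr' : r ≠ 0 := hr.ne'
  have hv3 : Qd/(2*r) - ν*L + ν*lam*(r*Pd) ≤ 0 := by
    have e : Qd/(2*r) - ν*L + ν*lam*(r*Pd) = r * ((2*r^2)⁻¹*Qd - ν/r*L + ν*lam*Pd) := by
      field_simp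
    rw [e]
    simpa using mul_le_mul_of_nonneg_left hv hr.le
  have hP2 : Tout - Tin ≤ r * Pd := by
    have := (div_le_iff₀ hr).mp hP
    linarith
  have hQr : 0 ≤ Qd/(2*r) := by positivity
  have hL2 : ν*L ≤ ν*(lam/2*(Tin+Tout)) := mul_le_mul_of_nonneg_left hL hν.le
  have hP3 : ν*lam*(Tout-Tin) ≤ ν*lam*(r*Pd) :=
    mul_le_mul_of_nonneg_left hP2 (mul_nonneg hν.le hlam.le)
  have hToutnn : 0 ≤ ν*lam*Tout := mul_nonneg (mul_nonneg hν.le hlam.le) hTout0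
  constructor
  · have h1 : ν*lam*(Tout - Tin) ≤ ν*lam*((Tin+Tout)/2) := by linarith
    have h1' := le_of_mul_le_mul_left h1 (mul_pos hν hlam)
    linarith
  · have h2 : Qd/(2*r) ≤ ν*lam*(3/2*Tin) := by linarith
    have h3 := (div_le_iff₀ (show (0:ℝ) < 2*r by linarith)).mp h2
    linarith

private lemma re_aux (ν lam r κ Tin W2 s2 Qd : ℝ) (hν : 0 < ν) (hlam : 0 < lam) (hr : 0 < r)
    (hκ : 0 < κ) (hTin : 0 ≤ Tin) (hW2 : 0 ≤ W2) (hs2 : 0 ≤ s2) (hQd : 0 ≤ Qd)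
    (hCS : Tin^2 ≤ W2 * s2)
    (hRE : κ * Real.sqrt ν * Real.sqrt s2 ≤ Real.sqrt Qd)
    (hbasic : Qd ≤ 3*ν*lam*r*Tin) :
    Tin ≤ 3*lam*r*W2/κ^2 := by
  have hRE2 : κ^2 * ν * s2 ≤ Qd := by
    have h0 : 0 ≤ κ * Real.sqrt ν * Real.sqrt s2 := by positivity
    have h5 := mul_self_le_mul_self h0 hRE
    rw [Real.mul_self_sqrt hQd] at h5
    have hν2 := Real.sq_sqrt hν.le
    have hs22 := Real.sq_sqrt hs2
    have e : (κ * Real.sqrt ν * Real.sqrt s2) * (κ * Real.sqrt ν * Real.sqrt s2)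
        = κ^2 * ν * s2 := by
      linear_combination (κ^2*(Real.sqrt s2)^2) * hν2 + (κ^2*ν) * hs22
    rw [e] at h5
    exact h5
  have hs2b : κ^2 * s2 ≤ 3*lam*r*Tin := by
    have h6 := le_trans hRE2 hbasic
    have h1 : ν*(κ^2*s2) ≤ ν*(3*lam*r*Tin) := by linarith
    exact le_of_mul_le_mul_left h1 hν
  have h2 : κ^2*Tin*Tin ≤ 3*lam*r*W2*Tin := by
    nlinarith [mul_le_mul_of_nonneg_left hs2b hW2, mul_le_mul_of_nonneg_left hCS (sq_nonneg κ)]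
  rcases eq_or_lt_of_le hTin with h|h
  · rw [← h]
    apply div_nonneg _ (by positivity)
    have : (0:ℝ) ≤ 3*lam*r := by positivity
    exact mul_nonneg this hW2
  · have h3 : κ^2*Tin ≤ 3*lam*r*W2 := le_of_mul_le_mul_right h2 h
    rw [le_div_iff₀ (show (0:ℝ) < κ^2 by positivity)]
    linarith

private lemma scale_aux (r ν Qd E : ℝ) (hr : 0 < r) (hν : 0 < ν)
    (h : (2*r^2)⁻¹*(Qd/2) ≤ ν/r/2*E) : ν⁻¹*Qd ≤ 2*r*E := by
  have hr' : r ≠ 0 := hr.ne'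
  have hν' : ν ≠ 0 := hν.ne'
  rw [inv_mul_le_iff₀ hν]
  have h' := mul_le_mul_of_nonneg_left h (show (0:ℝ) ≤ 4*r^2 by positivity)
  have e1 : 4*r^2*((2*r^2)⁻¹*(Qd/2)) = Qd := by field_simp; ring
  have e2 : 4*r^2*(ν/r/2*E) = ν*(2*r*E) := by field_simp; ring
  rw [e1, e2] at h'
  exact h'

/-- If `|u*_j| ≤ (1 − ζ) w_j λ/2` for all `j` and `max{|σ̂/σ − 1|, |σ/σ̂ − 1|} ≤ ζ < 1`,
then the minimizers `δ* = argmin V(·; β̌, u*)` and `δ*₀ = argmin V(·; β̌, (σ/σ̂)u*)`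
satisfy `(1/n)‖X(δ* − δ*₀)‖₂² ≤ 32 w_max r² λ² ζ Σ_{A₀} w_j² / (w_min κ(q,3)²)`. -/
theorem prediction_diff_bound_scaled_noise {n p : ℕ}
    (X : Matrix (Fin n) (Fin p) ℝ) (w : Fin p → ℝ) (hw : ∀ j, 0 < w j)
    (lam : ℝ) (hlam : 0 < lam) (r : ℝ) (hr : 0 < r)
    (wmin wmax : ℝ) (hwmin : IsLeast (Set.range w) wmin)
    (hwmax : IsGreatest (Set.range w) wmax)
    (hdiag : ∀ j, ((n : ℝ)⁻¹ • (Xᵀ * X)) j j = 1)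
    -- columns of X in general position: unique minimizers of V(·; β̌, u) for all u
    (huniq : ∀ b u : Fin p → ℝ, ∃! δ : Fin p → ℝ,
      ∀ δ', Vfun X w lam r b u δ ≤ Vfun X w lam r b u δ')
    (β₀ βc : Fin p → ℝ)
    (A₀ Ac : Finset (Fin p)) (hA₀ : ∀ j, j ∈ A₀ ↔ β₀ j ≠ 0)
    (hAc : ∀ j, j ∈ Ac ↔ βc j ≠ 0) (hsub : Ac ⊆ A₀)
    (q : ℕ) (hcard : Ac.card ≤ q) (hqp : q ≤ p)
    (σ σh : ℝ) (hσ : 0 < σ) (hσh : 0 < σh)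
    (ζ : ℝ) (hζ0 : 0 ≤ ζ) (hζ1 : ζ < 1)
    (hσζ : max |σh / σ - 1| |σ / σh - 1| ≤ ζ)
    -- Assumption RE(q, 3)
    (κq : ℝ) (hκq : 0 < κq)
    (hREq : ∀ A : Finset (Fin p), A.card ≤ q → ∀ δ : Fin p → ℝ, δ ≠ 0 →
      (∑ j ∈ Aᶜ, w j * |δ j|) ≤ 3 * ∑ j ∈ A, w j * |δ j| →
      κq * Real.sqrt n * Real.sqrt (∑ j ∈ A, δ j ^ 2) ≤
        Real.sqrt (∑ i, (X.mulVec δ i) ^ 2))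
    (ustar : Fin p → ℝ) (hustar : ∀ j, |ustar j| ≤ (1 - ζ) * (w j * lam / 2))
    (δstar δstar0 : Fin p → ℝ)
    (hδstar : ∀ δ, Vfun X w lam r βc ustar δstar ≤ Vfun X w lam r βc ustar δ)
    (hδstar0 : ∀ δ, Vfun X w lam r βc ((σ / σh) • ustar) δstar0 ≤
      Vfun X w lam r βc ((σ / σh) • ustar) δ) :
    (n : ℝ)⁻¹ * ∑ i, (X.mulVec (δstar - δstar0) i) ^ 2 ≤
      32 * wmax * r ^ 2 * lam ^ 2 * ζ * (∑ j ∈ A₀, w j ^ 2) /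
        (wmin * κq ^ 2) := by
  obtain ⟨j0, hj0⟩ := hwmin.1
  have hwminpos : 0 < wmin := hj0 ▸ hw j0
  obtain ⟨j1, hj1⟩ := hwmax.1
  have hwmaxpos : 0 < wmax := hj1 ▸ hw j1
  have hwmle : wmin ≤ wmax := hj1 ▸ hwmin.2 ⟨j1, rfl⟩
  have hS0 : (0:ℝ) ≤ ∑ j ∈ A₀, w j ^ 2 := Finset.sum_nonneg fun j _ => sq_nonneg _
  have hRHS0 : 0 ≤ 32 * wmax * r ^ 2 * lam ^ 2 * ζ * (∑ j ∈ A₀, w j ^ 2) /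
        (wmin * κq ^ 2) := by positivity
  rcases Nat.eq_zero_or_pos n with hn | hn
  · subst hn
    simpa using hRHS0
  have hnpos : (0:ℝ) < n := by exact_mod_cast hn
  have hn' : (n:ℝ) ≠ 0 := hnpos.ne'
  have hr' : r ≠ 0 := hr.ne'
  -- expansion of Vfun
  have hVeq : ∀ u δ : Fin p → ℝ, Vfun X w lam r βc u δ =
      (2*r^2)⁻¹ * (∑ i, (X.mulVec δ i)^2) - (n:ℝ)/r * (∑ j, δ j * u j)
        + (n:ℝ)*lam*(∑ j, w j * (|βc j + δ j / r| - |βc j|)) := by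
    intro u δ
    have hq : dotProduct δ (((n:ℝ)⁻¹ • (Xᵀ * X)).mulVec δ)
        = (n:ℝ)⁻¹ * ∑ i, (X.mulVec δ i)^2 := by
      rw [Matrix.smul_mulVec, dotProduct_smul, smul_eq_mul,
        ← Matrix.mulVec_mulVec, Matrix.dotProduct_mulVec, Matrix.vecMul_transpose]
      simp [dotProduct, sq]
    unfold Vfun
    rw [hq]
    have e : (n:ℝ) / (2*r^2) * ((n:ℝ)⁻¹ * ∑ i, (X.mulVec δ i)^2)
        = (2*r^2)⁻¹ * ∑ i, (X.mulVec δ i)^2 := by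
      field_simp
    rw [e]
    simp [dotProduct]
  have hW2nn : (0:ℝ) ≤ ∑ j ∈ Ac, w j ^ 2 := Finset.sum_nonneg fun j _ => sq_nonneg _
  -- cone + size bound for any minimizer with small noise
  have key : ∀ (u δ : Fin p → ℝ), (∀ j, |u j| ≤ w j * lam / 2) →
      (∀ δ', Vfun X w lam r βc u δ ≤ Vfun X w lam r βc u δ') →
      (∑ j ∈ Acᶜ, w j * |δ j|) ≤ 3 * (∑ j ∈ Ac, w j * |δ j|) ∧
      (∑ j ∈ Ac, w j * |δ j|) ≤ 3 * lam * r * (∑ j ∈ Ac, w j ^ 2) / κq ^ 2 := by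
    intro u δ hu hmin
    have hV0 : Vfun X w lam r βc u 0 = 0 := by
      simp [Vfun]
    have hv := hmin 0
    rw [hV0, hVeq u δ] at hv
    have hTin0 : 0 ≤ ∑ j ∈ Ac, w j * |δ j| :=
      Finset.sum_nonneg fun j _ => mul_nonneg (hw j).le (abs_nonneg _)
    have hTout0 : 0 ≤ ∑ j ∈ Acᶜ, w j * |δ j| :=
      Finset.sum_nonneg fun j _ => mul_nonneg (hw j).le (abs_nonneg _)
    have hQ0 : 0 ≤ ∑ i, (X.mulVec δ i)^2 := Finset.sum_nonneg fun i _ => sq_nonneg _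
    have hL : (∑ j, δ j * u j) ≤ lam/2*((∑ j ∈ Ac, w j * |δ j|) + ∑ j ∈ Acᶜ, w j * |δ j|) := by
      have step : ∀ j ∈ Finset.univ, δ j * u j ≤ lam/2 * (w j * |δ j|) := by
        intro j _
        calc δ j * u j ≤ |δ j * u j| := le_abs_self _
          _ = |δ j| * |u j| := abs_mul _ _
          _ ≤ |δ j| * (w j * lam / 2) := mul_le_mul_of_nonneg_left (hu j) (abs_nonneg _)
          _ = lam/2 * (w j * |δ j|) := by ring
      calc (∑ j, δ j * u j) ≤ ∑ j, lam/2 * (w j * |δ j|) := Finset.sum_le_sum step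
        _ = lam/2 * ∑ j, w j * |δ j| := by rw [Finset.mul_sum]
        _ = lam/2*((∑ j ∈ Ac, w j * |δ j|) + ∑ j ∈ Acᶜ, w j * |δ j|) := by
            rw [Finset.sum_add_sum_compl]
    have hP : ((∑ j ∈ Acᶜ, w j * |δ j|) - ∑ j ∈ Ac, w j * |δ j|)/r
        ≤ ∑ j, w j * (|βc j + δ j / r| - |βc j|) := by
      rw [← Finset.sum_add_sum_compl Ac (fun j => w j * (|βc j + δ j / r| - |βc j|))]
      have hin : -((∑ j ∈ Ac, w j * |δ j|)/r)
          ≤ ∑ j ∈ Ac, w j * (|βc j + δ j / r| - |βc j|) := by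
        have e0 : -((∑ j ∈ Ac, w j * |δ j|)/r) = ∑ j ∈ Ac, w j * (-(|δ j| / r)) := by
          rw [Finset.sum_div, ← Finset.sum_neg_distrib]
          apply Finset.sum_congr rfl
          intro j _
          ring
        rw [e0]
        apply Finset.sum_le_sum
        intro j _
        apply mul_le_mul_of_nonneg_left _ (hw j).le
        have h1 := abs_sub_abs_le_abs_sub (βc j) (βc j + δ j / r)
        have e : |βc j - (βc j + δ j / r)| = |δ j| / r := by
          rw [show βc j - (βc j + δ j / r) = -(δ j / r) by ring, abs_neg, abs_div,
            abs_of_pos hr]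
        rw [e] at h1
        linarith
      have hout : ∑ j ∈ Acᶜ, w j * (|βc j + δ j / r| - |βc j|)
          = (∑ j ∈ Acᶜ, w j * |δ j|)/r := by
        rw [Finset.sum_div]
        apply Finset.sum_congr rfl
        intro j hj
        have hb : βc j = 0 := by
          by_contra hc
          exact (Finset.mem_compl.mp hj) ((hAc j).mpr hc)
        rw [hb, zero_add, abs_zero, sub_zero, abs_div, abs_of_pos hr]
        ring
      rw [hout, sub_div]
      linarith
    obtain ⟨hcone, hbasic⟩ := cone_aux (n:ℝ) r lam _ _ _
      (∑ j ∈ Ac, w j * |δ j|) (∑ j ∈ Acᶜ, w j * |δ j|) hnpos hr hlam hTout0 hv hQ0 hL hP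
    refine ⟨hcone, ?_⟩
    by_cases hδ0 : δ = 0
    · subst hδ0
      have e : (∑ j ∈ Ac, w j * |(0 : Fin p → ℝ) j|) = 0 := by simp
      rw [e]
      apply div_nonneg _ (by positivity)
      exact mul_nonneg (by positivity) hW2nn
    · have hre := hREq Ac hcard δ hδ0 hcone
      have hs2nn : 0 ≤ ∑ j ∈ Ac, δ j ^ 2 := Finset.sum_nonneg fun j _ => sq_nonneg _
      have hCS : (∑ j ∈ Ac, w j * |δ j|)^2 ≤ (∑ j ∈ Ac, w j ^ 2) * ∑ j ∈ Ac, δ j ^ 2 := by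
        have h := Finset.sum_mul_sq_le_sq_mul_sq Ac w (fun j => |δ j|)
        simpa [sq_abs] using h
      exact re_aux (n:ℝ) lam r κq _ _ _ _ hnpos hlam hr hκq hTin0 hW2nn hs2nn hQ0 hCS hre hbasic
  -- apply to both minimizers
  have hρ : |σ/σh - 1| ≤ ζ := le_trans (le_max_right _ _) hσζ
  have hρub : σ/σh ≤ 1 + ζ := by
    have := (abs_le.mp hρ).2; linarith
  have hρlb : 0 < σ/σh := div_pos hσ hσh
  have hwl : ∀ j, (0:ℝ) ≤ w j * lam / 2 := fun j =>
    div_nonneg (mul_nonneg (hw j).le hlam.le) (by norm_num)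
  have hu1 : ∀ j, |ustar j| ≤ w j * lam / 2 := by
    intro j
    have h1 := hustar j
    nlinarith [hwl j]
  have hu2 : ∀ j, |((σ/σh) • ustar) j| ≤ w j * lam / 2 := by
    intro j
    have h1 := hustar j
    have e : |((σ/σh) • ustar) j| = (σ/σh) * |ustar j| := by
      rw [Pi.smul_apply, smul_eq_mul, abs_mul, abs_of_pos hρlb]
    rw [e]
    have h2 : (σ/σh) * |ustar j| ≤ (1+ζ) * ((1-ζ) * (w j * lam / 2)) :=
      mul_le_mul hρub h1 (abs_nonneg _) (by linarith)
    nlinarith [hwl j, mul_nonneg (mul_nonneg hζ0 hζ0) (hwl j)]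
  obtain ⟨hcone1, hT1⟩ := key ustar δstar hu1 hδstar
  obtain ⟨hcone2, hT2⟩ := key ((σ/σh) • ustar) δstar0 hu2 hδstar0
  -- midpoint argument
  obtain ⟨m, hm⟩ : ∃ m : Fin p → ℝ, m = (2:ℝ)⁻¹ • (δstar + δstar0) := ⟨_, rfl⟩
  have hXm : ∀ i, X.mulVec m i = 2⁻¹ * (X.mulVec δstar i + X.mulVec δstar0 i) := by
    intro i
    rw [hm, Matrix.mulVec_smul, Matrix.mulVec_add]
    simp
  have hXd : ∀ i, X.mulVec (δstar - δstar0) i = X.mulVec δstar i - X.mulVec δstar0 i := by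
    intro i
    rw [Matrix.mulVec_sub]
    simp
  have hQm : (∑ i, (X.mulVec m i)^2) =
      ((∑ i, (X.mulVec δstar i)^2) + (∑ i, (X.mulVec δstar0 i)^2)
        - (∑ i, (X.mulVec (δstar - δstar0) i)^2)/2)/2 := by
    have step : ∀ i ∈ Finset.univ, (X.mulVec m i)^2 =
        ((X.mulVec δstar i)^2/2 + (X.mulVec δstar0 i)^2/2
          - (X.mulVec (δstar - δstar0) i)^2/4) := by
      intro i _
      rw [hXm i, hXd i]; ring
    rw [Finset.sum_congr rfl step, Finset.sum_sub_distrib, Finset.sum_add_distrib,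
      ← Finset.sum_div, ← Finset.sum_div, ← Finset.sum_div]
    ring
  have hAm1 : (∑ j, m j * ustar j)
      = ((∑ j, δstar j * ustar j) + (∑ j, δstar0 j * ustar j))/2 := by
    have step : ∀ j ∈ Finset.univ, m j * ustar j
        = δstar j * ustar j / 2 + δstar0 j * ustar j / 2 := by
      intro j _
      simp only [hm, Pi.smul_apply, Pi.add_apply, smul_eq_mul]
      ring
    rw [Finset.sum_congr rfl step, Finset.sum_add_distrib, ← Finset.sum_div, ← Finset.sum_div]
    ring
  have hAm2 : (∑ j, m j * ((σ/σh) • ustar) j)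
      = ((∑ j, δstar j * ((σ/σh) • ustar) j) + (∑ j, δstar0 j * ((σ/σh) • ustar) j))/2 := by
    have step : ∀ j ∈ Finset.univ, m j * ((σ/σh) • ustar) j
        = δstar j * ((σ/σh) • ustar) j / 2 + δstar0 j * ((σ/σh) • ustar) j / 2 := by
      intro j _
      simp only [hm, Pi.smul_apply, Pi.add_apply, smul_eq_mul]
      ring
    rw [Finset.sum_congr rfl step, Finset.sum_add_distrib, ← Finset.sum_div, ← Finset.sum_div]
    ring
  -- penalty midpoint convexity
  have hPm : 2*(∑ j, w j * (|βc j + m j / r| - |βc j|))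
      ≤ (∑ j, w j * (|βc j + δstar j / r| - |βc j|))
        + ∑ j, w j * (|βc j + δstar0 j / r| - |βc j|) := by
    rw [← Finset.sum_add_distrib, Finset.mul_sum]
    apply Finset.sum_le_sum
    intro j _
    have e : βc j + m j / r = ((βc j + δstar j / r) + (βc j + δstar0 j / r))/2 := by
      simp only [hm, Pi.smul_apply, Pi.add_apply, smul_eq_mul]
      ring
    have habs : |βc j + m j / r| ≤ (|βc j + δstar j / r| + |βc j + δstar0 j / r|)/2 := by
      rw [e]
      calc |((βc j + δstar j / r) + (βc j + δstar0 j / r))/2|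
          = |(βc j + δstar j / r) + (βc j + δstar0 j / r)|/2 := by
            rw [abs_div]; norm_num
        _ ≤ (|βc j + δstar j / r| + |βc j + δstar0 j / r|)/2 := by
            have := abs_add_le (βc j + δstar j / r) (βc j + δstar0 j / r)
            linarith
    linarith [mul_le_mul_of_nonneg_left habs (hw j).le]
  have h1 := hδstar m
  have h2 := hδstar0 m
  rw [hVeq ustar δstar, hVeq ustar m, hQm, hAm1] at h1
  rw [hVeq ((σ/σh) • ustar) δstar0, hVeq ((σ/σh) • ustar) m, hQm, hAm2] at h2
  have hK : (0:ℝ) ≤ (n:ℝ)*lam := by positivity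
  have hmidkey := combine_aux ((2*r^2)⁻¹) ((n:ℝ)/r) ((n:ℝ)*lam) _ _ _ _ _ _ _ _ _ _ hK h1 h2 hPm
  -- bound the D term
  have hD : ((∑ j, δstar j * ustar j) - (∑ j, δstar0 j * ustar j))
      - ((∑ j, δstar j * ((σ/σh) • ustar) j) - (∑ j, δstar0 j * ((σ/σh) • ustar) j))
      = ∑ j, (δstar j - δstar0 j) * ((1 - σ/σh) * ustar j) := by
    simp only [← Finset.sum_sub_distrib]
    apply Finset.sum_congr rfl
    intro j _
    simp only [Pi.smul_apply, smul_eq_mul]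
    ring
  have h1ρ : |1 - σ/σh| ≤ ζ := by rw [abs_sub_comm]; exact hρ
  have hDb : (∑ j, (δstar j - δstar0 j) * ((1 - σ/σh) * ustar j))
      ≤ ζ * (lam/2) * ∑ j, w j * |δstar j - δstar0 j| := by
    rw [Finset.mul_sum]
    apply Finset.sum_le_sum
    intro j _
    have ha : (δstar j - δstar0 j) * ((1 - σ/σh) * ustar j)
        ≤ |δstar j - δstar0 j| * (|1 - σ/σh| * |ustar j|) := by
      rw [← abs_mul, ← abs_mul]
      exact le_abs_self _
    have hb : |1 - σ/σh| * |ustar j| ≤ ζ * (w j * lam / 2) :=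
      mul_le_mul h1ρ (hu1 j) (abs_nonneg _) hζ0
    calc (δstar j - δstar0 j) * ((1 - σ/σh) * ustar j)
        ≤ |δstar j - δstar0 j| * (|1 - σ/σh| * |ustar j|) := ha
      _ ≤ |δstar j - δstar0 j| * (ζ * (w j * lam / 2)) :=
          mul_le_mul_of_nonneg_left hb (abs_nonneg _)
      _ = ζ * (lam/2) * (w j * |δstar j - δstar0 j|) := by ring
  rw [hD] at hmidkey
  have hmid2 : (2*r^2)⁻¹*((∑ i, (X.mulVec (δstar - δstar0) i)^2)/2)
      ≤ (n:ℝ)/r/2*(ζ * (lam/2) * ∑ j, w j * |δstar j - δstar0 j|) := by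
    calc (2*r^2)⁻¹*((∑ i, (X.mulVec (δstar - δstar0) i)^2)/2)
        ≤ (n:ℝ)/r/2*(∑ j, (δstar j - δstar0 j) * ((1 - σ/σh) * ustar j)) := hmidkey
      _ ≤ (n:ℝ)/r/2*(ζ * (lam/2) * ∑ j, w j * |δstar j - δstar0 j|) :=
          mul_le_mul_of_nonneg_left hDb (by positivity)
  have hQdb := scale_aux r (n:ℝ) _ _ hr hnpos hmid2
  -- bound the weighted l1 norm of the difference
  have hsplit : (∑ j, w j * |δstar j - δstar0 j|)
      ≤ 4*((∑ j ∈ Ac, w j * |δstar j|) + ∑ j ∈ Ac, w j * |δstar0 j|) := by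
    have htri : ∀ (s : Finset (Fin p)), (∑ j ∈ s, w j * |δstar j - δstar0 j|)
        ≤ (∑ j ∈ s, w j * |δstar j|) + ∑ j ∈ s, w j * |δstar0 j| := by
      intro s
      rw [← Finset.sum_add_distrib]
      apply Finset.sum_le_sum
      intro j _
      have h5 : |δstar j - δstar0 j| ≤ |δstar j| + |δstar0 j| := by
        have h6 := abs_add_le (δstar j) (-(δstar0 j))
        simpa [sub_eq_add_neg] using h6
      linarith [mul_le_mul_of_nonneg_left h5 (hw j).le]
    have e : (∑ j, w j * |δstar j - δstar0 j|)
        = (∑ j ∈ Ac, w j * |δstar j - δstar0 j|) + ∑ j ∈ Acᶜ, w j * |δstar j - δstar0 j| := by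
      rw [Finset.sum_add_sum_compl]
    rw [e]
    have h3 := htri Ac
    have h4 := htri Acᶜ
    linarith only [h3, h4, hcone1, hcone2]
  -- final arithmetic
  have hSw : (∑ j, w j * |δstar j - δstar0 j|)
      ≤ 24 * lam * r * (∑ j ∈ Ac, w j ^ 2) / κq ^ 2 := by
    calc (∑ j, w j * |δstar j - δstar0 j|)
        ≤ 4*((∑ j ∈ Ac, w j * |δstar j|) + ∑ j ∈ Ac, w j * |δstar0 j|) := hsplit
      _ ≤ 4*(3 * lam * r * (∑ j ∈ Ac, w j ^ 2) / κq ^ 2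
            + 3 * lam * r * (∑ j ∈ Ac, w j ^ 2) / κq ^ 2) := by linarith only [hT1, hT2]
      _ = 24 * lam * r * (∑ j ∈ Ac, w j ^ 2) / κq ^ 2 := by ring
  have hstep : ((n:ℝ))⁻¹ * ∑ i, (X.mulVec (δstar - δstar0) i)^2
      ≤ 24 * r^2 * lam^2 * ζ * (∑ j ∈ Ac, w j ^ 2) / κq^2 := by
    calc ((n:ℝ))⁻¹ * ∑ i, (X.mulVec (δstar - δstar0) i)^2
        ≤ 2*r*(ζ * (lam/2) * ∑ j, w j * |δstar j - δstar0 j|) := hQdb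
      _ ≤ 2*r*(ζ * (lam/2) * (24 * lam * r * (∑ j ∈ Ac, w j ^ 2) / κq ^ 2)) := by
          apply mul_le_mul_of_nonneg_left _ (by positivity : (0:ℝ) ≤ 2*r)
          exact mul_le_mul_of_nonneg_left hSw (by positivity)
      _ = 24 * r^2 * lam^2 * ζ * (∑ j ∈ Ac, w j ^ 2) / κq^2 := by ring
  have hW2S0 : (∑ j ∈ Ac, w j ^ 2) ≤ ∑ j ∈ A₀, w j ^ 2 :=
    Finset.sum_le_sum_of_subset_of_nonneg hsub (fun j _ _ => sq_nonneg _)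
  have hfin : 24 * r^2 * lam^2 * ζ * (∑ j ∈ Ac, w j ^ 2) / κq^2
      ≤ 32 * wmax * r ^ 2 * lam ^ 2 * ζ * (∑ j ∈ A₀, w j ^ 2) / (wmin * κq ^ 2) := by
    rw [div_le_div_iff₀ (by positivity) (by positivity)]
    have hA : 24*wmin*(∑ j ∈ Ac, w j ^ 2) ≤ 32*wmax*(∑ j ∈ A₀, w j ^ 2) := by
      linarith only [mul_le_mul hwmle hW2S0 hW2nn hwmaxpos.le, mul_nonneg hwmaxpos.le hS0]
    have hB := mul_le_mul_of_nonneg_right hA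
      (show (0:ℝ) ≤ r^2*lam^2*ζ*κq^2 by positivity)
    linarith only [hB]
  linarith only [hstep, hfin]
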